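/- Let U ⊆ ℂ^n be a nonempty open connected set and let f : ℂ^n → ℂ be analytic on a neighbourhood of each point of U. If f is not identically zero on U (there exists x ∈ U with f(x) ≠ 0), then the zero set {x ∈ U : f(x) = 0} has Lebesgue measure zero, where ℂ^n is identified with ℝ^{2n} and equipped with its Lebesgue (volume) measure. -/

import Mathlib

open MeasureTheory Set Metric

noncomputable instance (n : ℕ) : MeasurableSpace (EuclideanSpace ℂ (Fin n)) := borel _
instance (n : ℕ) : BorelSpace (EuclideanSpace ℂ (Fin n)) := ⟨rfl⟩

/-- 1-D: the zero set of a non-trivial analytic function on an open preconnected set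
is countable. -/
lemma countable_zeroSet_1d {V : Set ℂ} (hV : IsOpen V) (hVc : IsPreconnected V)
    {k : ℂ → ℂ} (hk : AnalyticOnNhd ℂ k V) (hkne : ∃ t ∈ V, k t ≠ 0) :
    {t | t ∈ V ∧ k t = 0}.Countable := by
  set Z := {t | t ∈ V ∧ k t = 0} with hZ
  have hiso : ∀ z ∈ Z, ∀ᶠ t in nhdsWithin z {z}ᶜ, k t ≠ 0 := by
    intro z hz
    rcases (hk z hz.1).eventually_eq_zero_or_eventually_ne_zero with h | h
    · exfalso
      obtain ⟨t, htV, htk⟩ := hkne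
      exact htk (hk.eqOn_zero_of_preconnected_of_eventuallyEq_zero hVc hz.1 h htV)
    · exact h
  have key : ∀ z : ℂ, ∃ A : Set ℂ, A ∈ nhds z ∧ (z ∈ Z → Z ∩ A ⊆ {z}) := by
    intro z
    by_cases hz : z ∈ Z
    · refine ⟨{t | t ≠ z → k t ≠ 0}, ?_, ?_⟩
      · have := hiso z hz
        rw [eventually_nhdsWithin_iff] at this
        exact this
      · intro _
        rintro w ⟨⟨hwV, hw0⟩, hwA⟩
        simp only [mem_singleton_iff]
        by_contra hne'
        exact hwA hne' hw0
    · exact ⟨univ, Filter.univ_mem, fun h => absurd h hz⟩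
  choose A hA1 hA2 using key
  obtain ⟨T, hTZ, hTc, hTcov⟩ := TopologicalSpace.countable_cover_nhdsWithin
    (s := Z) (f := A) (fun x _ => mem_nhdsWithin_of_mem_nhds (hA1 x))
  refine hTc.mono ?_
  intro z hz
  obtain ⟨x, hxT, hzA⟩ := mem_iUnion₂.1 (hTcov hz)
  have := hA2 x (hTZ hxT) ⟨hz, hzA⟩
  simp only [mem_singleton_iff] at this
  simpa [this] using hxT

/-- The canonical `ℂ`-linear split of `ℂ^{n+1}` as `ℂ^n × ℂ`. -/
noncomputable def splitCLE (n : ℕ) :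
    EuclideanSpace ℂ (Fin (n + 1)) ≃L[ℂ] (EuclideanSpace ℂ (Fin n)) × ℂ :=
  LinearEquiv.toContinuousLinearEquiv
  { toFun := fun x => (WithLp.toLp 2 (Fin.init x.ofLp), x (Fin.last n))
    invFun := fun p => WithLp.toLp 2 (Fin.snoc p.1.ofLp p.2)
    map_add' := fun _ _ => rfl
    map_smul' := fun _ _ => rfl
    left_inv := fun x => congrArg (WithLp.toLp 2) (Fin.snoc_init_self x.ofLp)
    right_inv := fun p => by
      refine Prod.ext ?_ ?_
      · show WithLp.toLp 2 (Fin.init (Fin.snoc p.1.ofLp p.2 : Fin (n + 1) → ℂ)) = p.1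
        exact congrArg (WithLp.toLp 2) (Fin.init_snoc ..)
      · show (Fin.snoc p.1.ofLp p.2 : Fin (n + 1) → ℂ) (Fin.last n) = p.2
        exact Fin.snoc_last .. }

/-- Main induction. -/
lemma key_zeroSet : ∀ (n : ℕ) (U : Set (EuclideanSpace ℂ (Fin n))), IsOpen U →
    IsPreconnected U → ∀ f : EuclideanSpace ℂ (Fin n) → ℂ, AnalyticOnNhd ℂ f U →
    (∃ x ∈ U, f x ≠ 0) → volume {x | x ∈ U ∧ f x = 0} = 0 := by
  intro n
  induction n with
  | zero =>
    intro U hU hUconn f hf hne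
    haveI : Subsingleton (EuclideanSpace ℂ (Fin 0)) :=
      ⟨fun a b => by ext i; exact Fin.elim0 i⟩
    obtain ⟨x, hxU, hx⟩ := hne
    have : {x_1 | x_1 ∈ U ∧ f x_1 = 0} = ∅ := by
      ext y
      simp only [mem_setOf_eq, mem_empty_iff_false, iff_false, not_and]
      intro hyU
      rw [Subsingleton.elim y x]
      exact hx
    rw [this, measure_empty]
  | succ n IH =>
    intro U hU hUconn f hf hne
    set L := splitCLE n with hLdef
    set e : EuclideanSpace ℂ (Fin (n + 1)) ≃ᵐ (EuclideanSpace ℂ (Fin n)) × ℂ :=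
      L.toHomeomorph.toMeasurableEquiv with he
    have hecoe : (⇑e : _ → _) = ⇑L := rfl
    set W : Set ((EuclideanSpace ℂ (Fin n)) × ℂ) := ⇑L '' U with hWdef
    have hW : IsOpen W := L.toHomeomorph.isOpenMap U hU
    have hWconn : IsPreconnected W := hUconn.image _ L.continuous.continuousOn
    set g : (EuclideanSpace ℂ (Fin n)) × ℂ → ℂ := f ∘ ⇑L.symm with hgdef
    have hg : AnalyticOnNhd ℂ g W := by
      rintro p ⟨x, hx, rfl⟩
      have h1 : AnalyticAt ℂ (⇑L.symm) (L x) := by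
        have := (L.symm :
          ((EuclideanSpace ℂ (Fin n)) × ℂ) →L[ℂ] EuclideanSpace ℂ (Fin (n + 1))).analyticAt (L x)
        rwa [ContinuousLinearEquiv.coe_coe] at this
      have h2 : AnalyticAt ℂ f (L.symm (L x)) := by
        rw [L.symm_apply_apply]; exact hf x hx
      exact h2.comp h1
    have hgne : ∃ p ∈ W, g p ≠ 0 := by
      obtain ⟨x, hx, hfx⟩ := hne
      exact ⟨L x, mem_image_of_mem _ hx, by simpa [hgdef, L.symm_apply_apply] using hfx⟩
    -- main claim in the product space
    have main : volume {p | p ∈ W ∧ g p = 0} = 0 := by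
      set Z' := {p | p ∈ W ∧ g p = 0} with hZ'def
      have hgc : ContinuousOn g W := fun p hp => (hg p hp).continuousAt.continuousWithinAt
      have hopen : IsOpen (W ∩ g ⁻¹' ({0}ᶜ)) :=
        hgc.isOpen_inter_preimage hW (isClosed_singleton.isOpen_compl)
      have hZ'meas : MeasurableSet Z' := by
        have : Z' = W \ (W ∩ g ⁻¹' ({0}ᶜ)) := by
          ext p
          simp only [hZ'def, mem_setOf_eq, mem_diff, mem_inter_iff, mem_preimage,
            mem_compl_iff, mem_singleton_iff, not_and, not_not]
          tauto
        rw [this]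
        exact hW.measurableSet.diff hopen.measurableSet
      -- choose radii
      have hrad : ∀ p : (EuclideanSpace ℂ (Fin n)) × ℂ, ∃ r : ℝ, 0 < r ∧
          (p ∈ W → Metric.ball p r ⊆ W) := by
        intro p
        by_cases hp : p ∈ W
        · obtain ⟨r, hr, hball⟩ := Metric.isOpen_iff.1 hW p hp
          exact ⟨r, hr, fun _ => hball⟩
        · exact ⟨1, one_pos, fun h => absurd h hp⟩
      choose r hr hball using hrad
      obtain ⟨T, hTW, hTc, hTcov⟩ := TopologicalSpace.countable_cover_nhdsWithin
        (s := W) (f := fun p => Metric.ball p (r p))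
        (fun p _ => mem_nhdsWithin_of_mem_nhds (Metric.ball_mem_nhds p (hr p)))
      have hsub : Z' ⊆ ⋃ p ∈ T, Z' ∩ Metric.ball p (r p) := by
        intro q hq
        obtain ⟨p, hpT, hqball⟩ := mem_iUnion₂.1 (hTcov hq.1)
        exact mem_biUnion hpT ⟨hq, hqball⟩
      refine measure_mono_null hsub ((measure_biUnion_null_iff hTc).2 ?_)
      intro p hpT
      have hpW : p ∈ W := hTW hpT
      have hRW : Metric.ball p (r p) ⊆ W := hball p hpW
      -- the rectangle
      set A : Set (EuclideanSpace ℂ (Fin n)) := Metric.ball p.1 (r p) with hAdef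
      set D : Set ℂ := Metric.ball p.2 (r p) with hDdef
      have hrect : A ×ˢ D = Metric.ball p (r p) := ball_prod_same p.1 p.2 (r p)
      rw [← hrect]
      -- g is not identically zero on the rectangle
      have hgR : ∃ q ∈ A ×ˢ D, g q ≠ 0 := by
        by_contra hcon
        push_neg at hcon
        have hev : g =ᶠ[nhds p] 0 := by
          filter_upwards [Metric.ball_mem_nhds p (hr p)] with q hq
          exact hcon q (by rwa [hrect])
        obtain ⟨q, hqW, hgq⟩ := hgne
        exact hgq (hg.eqOn_zero_of_preconnected_of_eventuallyEq_zero hWconn hpW hev hqW)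
      obtain ⟨⟨y0, t0⟩, ⟨hy0A, ht0D⟩, hgq0⟩ := hgR
      -- the bad slice set is null by induction
      set S : Set (EuclideanSpace ℂ (Fin n)) := {y | y ∈ A ∧ g (y, t0) = 0} with hSdef
      have hS0 : volume S = 0 := by
        refine IH A isOpen_ball (convex_ball p.1 (r p)).isPreconnected
          (fun y => g (y, t0)) ?_ ⟨y0, hy0A, hgq0⟩
        intro y hyA
        have hmem : (y, t0) ∈ W := hRW (by rw [← hrect]; exact mem_prod.2 ⟨hyA, ht0D⟩)
        have h1 : AnalyticAt ℂ (fun y : EuclideanSpace ℂ (Fin n) => (y, t0)) y :=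
          analyticAt_id.prod analyticAt_const
        have h2 := AnalyticAt.comp_of_eq (hg _ hmem) h1 rfl
        exact h2
      -- Fubini
      rw [show (volume : Measure ((EuclideanSpace ℂ (Fin n)) × ℂ)) = volume.prod volume from rfl]
      rw [Measure.measure_prod_null (hZ'meas.inter (measurableSet_ball.prod measurableSet_ball))]
      have hae : ∀ᵐ y : EuclideanSpace ℂ (Fin n), y ∉ S :=
        (measure_eq_zero_iff_ae_notMem (μ := volume)).1 hS0
      filter_upwards [hae] with y hyS
      simp only [Pi.zero_apply]
      by_cases hyA : y ∈ A
      · have hgy : g (y, t0) ≠ 0 := fun h => hyS ⟨hyA, h⟩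
        have hsub2 : Prod.mk y ⁻¹' (Z' ∩ A ×ˢ D) ⊆ {t | t ∈ D ∧ g (y, t) = 0} := by
          rintro t ⟨⟨-, hg0⟩, -, htD⟩
          exact ⟨htD, hg0⟩
        refine measure_mono_null hsub2 ?_
        refine Set.Countable.measure_zero ?_ _
        refine countable_zeroSet_1d isOpen_ball (convex_ball p.2 (r p)).isPreconnected
          ?_ ⟨t0, ht0D, hgy⟩
        intro t htD
        have hmem : (y, t) ∈ W := hRW (by rw [← hrect]; exact mem_prod.2 ⟨hyA, htD⟩)
        have h1 : AnalyticAt ℂ (fun t : ℂ => ((y : EuclideanSpace ℂ (Fin n)), t)) t :=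
          analyticAt_const.prod analyticAt_id
        have h2 := AnalyticAt.comp_of_eq (hg _ hmem) h1 rfl
        exact h2
      · have : Prod.mk y ⁻¹' (Z' ∩ A ×ˢ D) = ∅ := by
          ext t
          simp only [mem_preimage, mem_inter_iff, mem_prod, mem_empty_iff_false, iff_false]
          rintro ⟨-, hyA', -⟩
          exact hyA hyA'
        rw [this, measure_empty]
    -- transfer back
    have himg : ⇑e '' {x | x ∈ U ∧ f x = 0} = {p | p ∈ W ∧ g p = 0} := by
      rw [hecoe]
      ext q
      constructor
      · rintro ⟨x, ⟨hxU, hfx⟩, rfl⟩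
        exact ⟨mem_image_of_mem _ hxU, by simpa [hgdef, L.symm_apply_apply] using hfx⟩
      · rintro ⟨⟨x, hxU, rfl⟩, hgq⟩
        exact ⟨x, ⟨hxU, by simpa [hgdef, L.symm_apply_apply] using hgq⟩, rfl⟩
    haveI : ((volume : Measure (EuclideanSpace ℂ (Fin (n + 1)))).map ⇑e).IsAddHaarMeasure := by
      rw [hecoe]
      exact L.isAddHaarMeasure_map volume
    haveI : (volume : Measure ((EuclideanSpace ℂ (Fin n)) × ℂ)).IsAddHaarMeasure :=
      (inferInstance : ((volume : Measure (EuclideanSpace ℂ (Fin n))).prod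
        (volume : Measure ℂ)).IsAddHaarMeasure)
    have hsmul : (volume : Measure (EuclideanSpace ℂ (Fin (n + 1)))).map ⇑e =
        (Measure.addHaarScalarFactor ((volume : Measure (EuclideanSpace ℂ (Fin (n + 1)))).map ⇑e)
          (volume : Measure ((EuclideanSpace ℂ (Fin n)) × ℂ))) •
          (volume : Measure ((EuclideanSpace ℂ (Fin n)) × ℂ)) :=
      Measure.isAddLeftInvariant_eq_smul _ _
    calc volume {x | x ∈ U ∧ f x = 0}
        = volume (⇑e ⁻¹' (⇑e '' {x | x ∈ U ∧ f x = 0})) := by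
          rw [Set.preimage_image_eq _ e.injective]
      _ = ((volume : Measure (EuclideanSpace ℂ (Fin (n + 1)))).map ⇑e)
            (⇑e '' {x | x ∈ U ∧ f x = 0}) := (e.map_apply _).symm
      _ = 0 := by rw [hsmul, himg]; simp [main]

theorem zeroSet_measure_zero_of_analytic {n : ℕ} (U : Set (EuclideanSpace ℂ (Fin n)))
    (hU : IsOpen U) (hUne : U.Nonempty) (hUconn : IsConnected U)
    (f : EuclideanSpace ℂ (Fin n) → ℂ) (hf : AnalyticOnNhd ℂ f U)
    (hne : ∃ x ∈ U, f x ≠ 0) :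
    volume {x | x ∈ U ∧ f x = 0} = 0 :=
  key_zeroSet n U hU hUconn.isPreconnected f hf hne
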